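/- arXiv:1603.07705 — 2 statements merged into one kernel-verified Lean document; each statement's English description precedes it below -/
import Mathlib

section
/- Let K ⊂ ℝ be compact with nested compacts F_{s+1} ⊆ F_s, K = ⋂_s F_s, Cap(F_s) → Cap(K) > 0, μ_{F_s} → μ_K weak-star, and suppose W_n(μ_{F_s}) ≥ 1 for all n and s. Then W_n(μ_K) ≥ 1 for all n ∈ ℕ, where W_n(ν) := ‖P_n(·;ν)‖_{L²(ν)}/Cap(supp)^n with the appropriate capacity in the denominator. -/
open MeasureTheory Filter Polynomial

/-- Let `K ⊆ ℝ` be compact, approximated by nested compacts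
`F (s+1) ⊆ F s` with `K = ⋂ s, F s`, capacities `capF s → capK > 0` (with
`capK ≤ capF s`), equilibrium measures `μF s → μK` weak-star, and suppose the
Widom factors of the `μF s` satisfy `W n (μF s) ≥ 1` for all `n, s`.  Then
`W n (μK) = ‖P n (·;μK)‖_{L²(μK)} / capK ^ n ≥ 1` for all `n`. -/
theorem widom_ge_one_of_approximation
    (K : Set ℝ) (hK : IsCompact K) (hKinf : K.Infinite)
    (F : ℕ → Set ℝ) (hF : ∀ s, IsCompact (F s))
    (hnest : ∀ s, F (s + 1) ⊆ F s) (hsub : ∀ s, K ⊆ F s)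
    (hinter : K = ⋂ s, F s)
    (capK : ℝ) (capF : ℕ → ℝ) (hcapKpos : 0 < capK)
    (hmono : ∀ s, capK ≤ capF s)
    (hcaplim : Tendsto capF atTop (nhds capK))
    (μK : Measure ℝ) [IsProbabilityMeasure μK] (hsuppK : μK Kᶜ = 0)
    (μF : ℕ → Measure ℝ) [∀ s, IsProbabilityMeasure (μF s)]
    (hsuppF : ∀ s, μF s (F s)ᶜ = 0)
    (hweak : ∀ f : ℝ → ℝ, Continuous f →
      Tendsto (fun s => ∫ t, f t ∂(μF s)) atTop (nhds (∫ t, f t ∂μK)))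
    (P : ℕ → Polynomial ℝ) (PF : ℕ → ℕ → Polynomial ℝ)
    (hPmonic : ∀ n, (P n).Monic) (hPdeg : ∀ n, (P n).natDegree = n)
    (hPmin : ∀ n, ∀ Q : Polynomial ℝ, Q.Monic → Q.natDegree = n →
      ∫ t, (P n).eval t ^ 2 ∂μK ≤ ∫ t, Q.eval t ^ 2 ∂μK)
    (hPFmonic : ∀ s n, (PF s n).Monic) (hPFdeg : ∀ s n, (PF s n).natDegree = n)
    (hPFmin : ∀ s n, ∀ Q : Polynomial ℝ, Q.Monic → Q.natDegree = n →
      ∫ t, (PF s n).eval t ^ 2 ∂(μF s) ≤ ∫ t, Q.eval t ^ 2 ∂(μF s))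
    (hW : ∀ s n, 1 ≤ Real.sqrt (∫ t, (PF s n).eval t ^ 2 ∂(μF s)) / capF s ^ n) :
    ∀ n : ℕ, 1 ≤ Real.sqrt (∫ t, (P n).eval t ^ 2 ∂μK) / capK ^ n := by

  intro n
  have hcapn : (0:ℝ) < capK ^ n := pow_pos hcapKpos n
  -- key bound on each F s
  have hbound : ∀ s, capK ^ n * capK ^ n ≤ ∫ t, (P n).eval t ^ 2 ∂(μF s) := by
    intro s
    have hcapFn : (0:ℝ) < capF s ^ n := pow_pos (lt_of_lt_of_le hcapKpos (hmono s)) n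
    have h1 := hW s n
    have h2 : capF s ^ n ≤ Real.sqrt (∫ t, (PF s n).eval t ^ 2 ∂(μF s)) := by
      have := (one_le_div hcapFn).mp h1
      linarith
    have h3 : capF s ^ n * capF s ^ n ≤ ∫ t, (PF s n).eval t ^ 2 ∂(μF s) := by
      have h4 := mul_self_le_mul_self (le_of_lt hcapFn) h2
      calc capF s ^ n * capF s ^ n
          ≤ Real.sqrt (∫ t, (PF s n).eval t ^ 2 ∂(μF s)) *
            Real.sqrt (∫ t, (PF s n).eval t ^ 2 ∂(μF s)) := h4
        _ = ∫ t, (PF s n).eval t ^ 2 ∂(μF s) := by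
            rw [Real.mul_self_sqrt]
            have : (0:ℝ) ≤ ∫ t, ((PF s n).eval t)^2 ∂(μF s) :=
              integral_nonneg fun t => sq_nonneg _
            exact this
    have h5 : ∫ t, (PF s n).eval t ^ 2 ∂(μF s) ≤ ∫ t, (P n).eval t ^ 2 ∂(μF s) :=
      hPFmin s n (P n) (hPmonic n) (hPdeg n)
    have hKF : capK ^ n * capK ^ n ≤ capF s ^ n * capF s ^ n := by
      have := pow_le_pow_left₀ (le_of_lt hcapKpos) (hmono s) n
      exact mul_self_le_mul_self (le_of_lt hcapn) this
    linarith
  -- pass to limit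
  have hcont : Continuous fun t => (P n).eval t ^ 2 := by
    exact ((P n).continuous_aeval).pow 2
  have hlim := hweak (fun t => (P n).eval t ^ 2) hcont
  have hint : capK ^ n * capK ^ n ≤ ∫ t, (P n).eval t ^ 2 ∂μK :=
    ge_of_tendsto hlim (Eventually.of_forall hbound)
  have hs : capK ^ n ≤ Real.sqrt (∫ t, (P n).eval t ^ 2 ∂μK) := by
    have := Real.sqrt_le_sqrt hint
    rwa [Real.sqrt_mul_self (le_of_lt hcapn)] at this
  rw [le_div_iff₀ hcapn]
  linarith
end

section
/- Let K = ⋃_{j=1}^p [α_j, β_j] be a disjoint union of p intervals with equilibrium measure density μ_K'(t) = (1/π)|q(t)|/√(∏_{j=1}^p |(t−α_j)(t−β_j)|), where q(t) = ∏_{j=1}^{p−1}(t − c_j) and c_j are the critical points of the Green function g_K. Then ∫ log μ_K'(t) dμ_K(t) = −log π + PW(K) − log Cap(K), where PW(K) = Σ_j g_K(c_j). -/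
open MeasureTheory Finset

private lemma aux_rpow_int (c a b : ℝ) {r : ℝ} (hr : -1 < r) :
    IntegrableOn (fun t => |t - c| ^ r) (Set.Icc a b) volume := by
  set S : ℝ := |a - c| + |b - c| with hS
  have hS0 : 0 ≤ S := by positivity
  have hsub : Set.Icc a b ⊆ Set.Icc (c - S) (c + S) := by
    intro t ht
    obtain ⟨h1, h2⟩ := ht
    have ha1 := neg_le_abs (a - c)
    have hb1 := le_abs_self (b - c)
    have ha2 := abs_nonneg (a - c)
    have hb2 := abs_nonneg (b - c)
    constructor
    · simp only [hS]; linarith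
    · simp only [hS]; linarith
  refine IntegrableOn.mono_set ?_ hsub
  have h1 : IntervalIntegrable (fun x : ℝ => x ^ r) volume 0 S :=
    intervalIntegral.intervalIntegrable_rpow' hr
  have hright : IntegrableOn (fun t => |t - c| ^ r) (Set.Icc c (c + S)) volume := by
    have h2 : IntervalIntegrable (fun x : ℝ => (x - c) ^ r) volume c (c + S) := by
      have := h1.comp_sub_right c
      simpa [add_comm, sub_eq_add_neg] using this
    have h3 : IntegrableOn (fun x : ℝ => (x - c) ^ r) (Set.Ioc c (c + S)) volume :=
      (intervalIntegrable_iff_integrableOn_Ioc_of_le (by linarith)).mp h2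
    rw [integrableOn_Icc_iff_integrableOn_Ioc]
    refine h3.congr_fun (fun x hx => ?_) measurableSet_Ioc
    rw [abs_of_nonneg (by linarith [hx.1] : (0:ℝ) ≤ x - c)]
  have hleft : IntegrableOn (fun t => |t - c| ^ r) (Set.Icc (c - S) c) volume := by
    have h2 : IntervalIntegrable (fun x : ℝ => (c - x) ^ r) volume (c - S) c := by
      have := (h1.comp_sub_left c).symm
      simpa [add_comm, sub_eq_add_neg] using this
    have h3 : IntegrableOn (fun x : ℝ => (c - x) ^ r) (Set.Ioc (c - S) c) volume :=
      (intervalIntegrable_iff_integrableOn_Ioc_of_le (by linarith)).mp h2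
    rw [integrableOn_Icc_iff_integrableOn_Ioc]
    refine h3.congr_fun (fun x hx => ?_) measurableSet_Ioc
    rw [abs_of_nonpos (by linarith [hx.2] : x - c ≤ 0), neg_sub]
  have := hleft.union hright
  rwa [Set.Icc_union_Icc_eq_Icc (by linarith) (by linarith)] at this

private lemma aux_log_bound {u : ℝ} (hu : 0 ≤ u) :
    |Real.log u| ≤ 4 * u ^ (-(1/4) : ℝ) + u := by
  rcases eq_or_lt_of_le hu with h | h
  · rw [← h]
    simp [Real.zero_rpow (by norm_num : (-(1/4) : ℝ) ≠ 0)]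
  · rcases le_total u 1 with h1 | h1
    · have hlog : Real.log (u ^ (-(1/4):ℝ)) ≤ u ^ (-(1/4):ℝ) :=
        Real.log_le_self (Real.rpow_pos_of_pos h _).le
      rw [Real.log_rpow h] at hlog
      have habs : |Real.log u| = -Real.log u := abs_of_nonpos (Real.log_nonpos hu h1)
      linarith
    · have habs : |Real.log u| = Real.log u := abs_of_nonneg (Real.log_nonneg h1)
      have := Real.log_le_self hu
      have hnn : 0 ≤ u ^ (-(1/4):ℝ) := Real.rpow_nonneg hu _
      linarith

private lemma aux_young {a b : ℝ} (ha : 0 ≤ a) (hb : 0 ≤ b) :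
    a * b ≤ a ^ (3:ℝ) + b ^ ((3:ℝ)/2) := by
  rcases eq_or_lt_of_le ha with h | h
  · rw [← h, zero_mul]; positivity
  rcases eq_or_lt_of_le hb with h' | h'
  · rw [← h', mul_zero]; positivity
  rcases le_total b (a ^ (2:ℝ)) with hc | hc
  · have h1 : a * b ≤ a * a ^ (2:ℝ) := mul_le_mul_of_nonneg_left hc ha
    have h2 : a ^ (3:ℝ) = a ^ (1:ℝ) * a ^ (2:ℝ) := by
      rw [← Real.rpow_add h]; norm_num
    rw [Real.rpow_one] at h2
    have h3 : 0 ≤ b ^ ((3:ℝ)/2) := Real.rpow_nonneg hb _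
    calc a * b ≤ a * a ^ (2:ℝ) := h1
      _ = a ^ (3:ℝ) := h2.symm
      _ ≤ a ^ (3:ℝ) + b ^ ((3:ℝ)/2) := by linarith
  · have hab : a ≤ b ^ ((1:ℝ)/2) := by
      have h4 : (a ^ (2:ℝ)) ^ ((1:ℝ)/2) ≤ b ^ ((1:ℝ)/2) :=
        Real.rpow_le_rpow (Real.rpow_nonneg ha _) hc (by norm_num)
      rwa [← Real.rpow_mul ha, show (2:ℝ) * (1/2) = 1 by norm_num, Real.rpow_one] at h4
    have h1 : a * b ≤ b ^ ((1:ℝ)/2) * b := mul_le_mul_of_nonneg_right hab hb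
    have h2 : b ^ ((3:ℝ)/2) = b ^ ((1:ℝ)/2) * b ^ (1:ℝ) := by
      rw [← Real.rpow_add h']; norm_num
    rw [Real.rpow_one] at h2
    have h3 : 0 ≤ a ^ (3:ℝ) := Real.rpow_nonneg ha _
    calc a * b ≤ b ^ ((1:ℝ)/2) * b := h1
      _ = b ^ ((3:ℝ)/2) := h2.symm
      _ ≤ a ^ (3:ℝ) + b ^ ((3:ℝ)/2) := by linarith

private lemma aux_piece (z γ a b : ℝ) (w : ℝ → ℝ)
    (hw0 : ∀ t, 0 ≤ w t) (hwm : Measurable w) (C : ℝ) (hC : 0 ≤ C)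
    (hbound : ∀ t ∈ Set.Icc a b, w t ≤ C * |t - γ| ^ (-(1/2) : ℝ)) :
    IntegrableOn (fun t => Real.log |t - z| * w t) (Set.Icc a b) volume := by
  set U : ℝ := |a - z| + |b - z| + 1 with hU
  have hU0 : (0:ℝ) ≤ U := by positivity
  set A : ℝ := 4 * C + C * U with hA
  have hA0 : (0:ℝ) ≤ A := by positivity
  have hG : IntegrableOn
      (fun t => A * (|t - z| ^ (-(3/4) : ℝ) + |t - γ| ^ (-(3/4) : ℝ) + 1))
      (Set.Icc a b) volume := by
    refine Integrable.const_mul ?_ A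
    exact ((aux_rpow_int z a b (by norm_num)).add (aux_rpow_int γ a b (by norm_num))).add
      ((integrableOn_const_iff (by simp)).mpr (Or.inr measure_Icc_lt_top))
  refine Integrable.mono hG ?_ ?_
  · exact (((measurable_id.sub_const z).abs.log).mul hwm).aestronglyMeasurable
  · rw [ae_restrict_iff' measurableSet_Icc]
    refine Filter.Eventually.of_forall fun t ht => ?_
    have hu0 : (0:ℝ) ≤ |t - z| := abs_nonneg _
    have hx0 : (0:ℝ) ≤ |t - γ| := abs_nonneg _
    have huU : |t - z| ≤ U := by
      rcases le_total t z with h | h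
      · rw [abs_of_nonpos (by linarith)]
        have := neg_le_abs (a - z)
        have := abs_nonneg (b - z)
        have := ht.1
        simp only [hU]; linarith
      · rw [abs_of_nonneg (by linarith)]
        have := le_abs_self (b - z)
        have := abs_nonneg (a - z)
        have := ht.2
        simp only [hU]; linarith
    have young : |t - z| ^ (-(1/4):ℝ) * |t - γ| ^ (-(1/2):ℝ) ≤
        |t - z| ^ (-(3/4):ℝ) + |t - γ| ^ (-(3/4):ℝ) := by
      have h := aux_young (Real.rpow_nonneg hu0 (-(1/4):ℝ)) (Real.rpow_nonneg hx0 (-(1/2):ℝ))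
      rw [← Real.rpow_mul hu0, ← Real.rpow_mul hx0] at h
      norm_num at h ⊢
      convert h using 3 <;> norm_num
    have hxw : |t - γ| ^ (-(1/2):ℝ) ≤ |t - γ| ^ (-(3/4):ℝ) + 1 := by
      rcases eq_or_lt_of_le hx0 with h | h
      · rw [← h, Real.zero_rpow (by norm_num), Real.zero_rpow (by norm_num)]
        norm_num
      · rcases le_total (|t - γ|) 1 with h1 | h1
        · have := Real.rpow_le_rpow_of_exponent_ge h h1
            (by norm_num : (-(3/4):ℝ) ≤ -(1/2))
          linarith
        · have h2 : |t - γ| ^ (-(1/2):ℝ) ≤ 1 :=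
            Real.rpow_le_one_of_one_le_of_nonpos h1 (by norm_num)
          have h3 : (0:ℝ) ≤ |t - γ| ^ (-(3/4):ℝ) := Real.rpow_nonneg hx0 _
          linarith
    have hnorm1 : ‖Real.log |t - z| * w t‖ = |Real.log (|t - z|)| * w t := by
      rw [norm_mul, Real.norm_eq_abs, Real.norm_eq_abs, abs_of_nonneg (hw0 t)]
    have hnorm2 : ‖A * (|t - z| ^ (-(3/4) : ℝ) + |t - γ| ^ (-(3/4) : ℝ) + 1)‖ =
        A * (|t - z| ^ (-(3/4) : ℝ) + |t - γ| ^ (-(3/4) : ℝ) + 1) := by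
      rw [Real.norm_eq_abs, abs_of_nonneg]
      have := Real.rpow_nonneg hu0 (-(3/4):ℝ)
      have := Real.rpow_nonneg hx0 (-(3/4):ℝ)
      positivity
    rw [hnorm1, hnorm2]
    have step1 : |Real.log (|t - z|)| * w t ≤
        (4 * |t - z| ^ (-(1/4):ℝ) + |t - z|) * (C * |t - γ| ^ (-(1/2):ℝ)) :=
      mul_le_mul (aux_log_bound hu0) (hbound t ht) (hw0 t)
        (by positivity)
    have step2 : (4 * |t - z| ^ (-(1/4):ℝ) + |t - z|) * (C * |t - γ| ^ (-(1/2):ℝ)) =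
        4 * C * (|t - z| ^ (-(1/4):ℝ) * |t - γ| ^ (-(1/2):ℝ)) +
          C * (|t - z| * |t - γ| ^ (-(1/2):ℝ)) := by ring
    have step3 : |t - z| * |t - γ| ^ (-(1/2):ℝ) ≤ U * (|t - γ| ^ (-(3/4):ℝ) + 1) :=
      mul_le_mul huU hxw (Real.rpow_nonneg hx0 _) hU0
    have h4C : (0:ℝ) ≤ 4 * C := by linarith
    have final : 4 * C * (|t - z| ^ (-(1/4):ℝ) * |t - γ| ^ (-(1/2):ℝ)) +
          C * (|t - z| * |t - γ| ^ (-(1/2):ℝ)) ≤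
        A * (|t - z| ^ (-(3/4) : ℝ) + |t - γ| ^ (-(3/4) : ℝ) + 1) := by
      have b1 := mul_le_mul_of_nonneg_left young h4C
      have b2 := mul_le_mul_of_nonneg_left step3 hC
      have n1 : (0:ℝ) ≤ |t - z| ^ (-(3/4):ℝ) := Real.rpow_nonneg hu0 _
      have n2 : (0:ℝ) ≤ |t - γ| ^ (-(3/4):ℝ) := Real.rpow_nonneg hx0 _
      have n3 : (0:ℝ) ≤ C * U := by positivity
      have n4 : (0:ℝ) ≤ C * U * |t - z| ^ (-(3/4):ℝ) := by positivity
      simp only [hA]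
      nlinarith [b1, b2]
    calc |Real.log (|t - z|)| * w t ≤ _ := step1
      _ = _ := step2
      _ ≤ _ := final

/-- Let `K = ⋃_{j=1}^p [α j, β j]` be a disjoint union of `p` compact
intervals with equilibrium measure `μ` of density
`w t = (1/π) |∏_j (t - cp j)| / √(∏_j |(t - α j)(t - β j)|)`, where the `cp j` are the
critical points of the Green function `g` of the complement (one in each gap), and let
`PW K = ∑ j, g (cp j)`.  Using `∫ log |z - t| dμ(t) = log cap` for `z ∈ K` and
`∫ log |t - cp j| dμ(t) = g (cp j) + log cap`, one has
`∫ log (w t) dμ(t) = - log π + PW K - log cap`. -/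
theorem szego_integral_equilibrium
    (p : ℕ) (hp : 1 ≤ p) (α β : Fin p → ℝ) (hαβ : ∀ j, α j < β j)
    (hdisj : Pairwise (Function.onFun Disjoint fun j => Set.Icc (α j) (β j)))
    (cp : Fin (p - 1) → ℝ)
    (hgap : ∀ j : Fin (p - 1), ∀ i : Fin p, cp j ∉ Set.Icc (α i) (β i))
    (g : ℝ → ℝ) (cap : ℝ) (hcap : 0 < cap)
    (μ : Measure ℝ) [IsProbabilityMeasure μ]
    (hsupp : μ (⋃ j, Set.Icc (α j) (β j))ᶜ = 0)
    (w : ℝ → ℝ)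
    (hw : ∀ t, w t = (1 / Real.pi) * (∏ j, |t - cp j|) /
      Real.sqrt (∏ j, |(t - α j) * (t - β j)|))
    (hdensity : μ = (volume.restrict (⋃ j, Set.Icc (α j) (β j))).withDensity
      fun t => ENNReal.ofReal (w t))
    (hfrost : ∀ z ∈ ⋃ j, Set.Icc (α j) (β j),
      ∫ t, Real.log |z - t| ∂μ = Real.log cap)
    (hgreen : ∀ j : Fin (p - 1),
      ∫ t, Real.log |t - cp j| ∂μ = g (cp j) + Real.log cap) :
    ∫ t, Real.log (w t) ∂μ =
      -Real.log Real.pi + (∑ j, g (cp j)) - Real.log cap := by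
  classical
  have hw0 : ∀ t, 0 ≤ w t := fun t => by rw [hw t]; positivity
  have hwmeas : Measurable w := by
    have hfe : w = fun t => (1 / Real.pi) * (∏ j, |t - cp j|) /
        Real.sqrt (∏ j, |(t - α j) * (t - β j)|) := funext hw
    rw [hfe]
    fun_prop
  have key : ∀ z : ℝ, Integrable (fun t => Real.log |t - z|) μ := by
    intro z
    rw [hdensity, integrable_withDensity_iff (hwmeas.ennreal_ofReal)
      (Filter.Eventually.of_forall fun x => ENNReal.ofReal_lt_top)]
    have hfe2 : (fun x => Real.log |x - z| * (ENNReal.ofReal (w x)).toReal) =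
        fun x => Real.log |x - z| * w x :=
      funext fun x => by rw [ENNReal.toReal_ofReal (hw0 x)]
    rw [hfe2]
    have : IntegrableOn (fun t => Real.log |t - z| * w t)
        (⋃ j, Set.Icc (α j) (β j)) volume := by
      rw [integrableOn_finite_iUnion]
      intro j
      -- separation facts
      have hsep : ∀ i, i ≠ j → β i < α j ∨ β j < α i := by
        intro i hij
        by_contra hcon
        push_neg at hcon
        obtain ⟨h1, h2⟩ := hcon
        have hmem1 : max (α i) (α j) ∈ Set.Icc (α i) (β i) :=
          ⟨le_max_left _ _, max_le (hαβ i).le h1⟩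
        have hmem2 : max (α i) (α j) ∈ Set.Icc (α j) (β j) :=
          ⟨le_max_right _ _, max_le h2 (hαβ j).le⟩
        exact Set.disjoint_left.mp (hdisj hij) hmem1 hmem2
      set mfun : Fin p → ℝ := fun i => max (α j - β i) (α i - β j) with hmfun
      have hmpos : ∀ i, i ≠ j → 0 < mfun i := by
        intro i hij
        rcases hsep i hij with hc | hc
        · exact lt_max_iff.mpr (Or.inl (by linarith))
        · exact lt_max_iff.mpr (Or.inr (by linarith))
      have hmle : ∀ i, i ≠ j → ∀ t ∈ Set.Icc (α j) (β j),
          mfun i ≤ |t - α i| ∧ mfun i ≤ |t - β i| := by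
        intro i hij t ht
        obtain ⟨ht1, ht2⟩ := ht
        have hi := hαβ i; have hj := hαβ j
        rcases hsep i hij with hc | hc
        · rw [abs_of_nonneg (by linarith : (0:ℝ) ≤ t - α i),
              abs_of_nonneg (by linarith : (0:ℝ) ≤ t - β i)]
          exact ⟨max_le (by linarith) (by linarith), max_le (by linarith) (by linarith)⟩
        · rw [abs_of_nonpos (by linarith : t - α i ≤ 0),
              abs_of_nonpos (by linarith : t - β i ≤ 0)]
          exact ⟨max_le (by linarith) (by linarith), max_le (by linarith) (by linarith)⟩
      set c1 : ℝ := ∏ i ∈ Finset.univ.erase j, (mfun i)^2 with hc1def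
      have hc1 : 0 < c1 :=
        Finset.prod_pos fun i hi => pow_pos (hmpos i (Finset.mem_erase.mp hi).1) 2
      have hPlow : ∀ t ∈ Set.Icc (α j) (β j),
          c1 * |(t - α j) * (t - β j)| ≤ ∏ i, |(t - α i) * (t - β i)| := by
        intro t ht
        rw [← Finset.mul_prod_erase Finset.univ (fun i => |(t - α i) * (t - β i)|)
          (Finset.mem_univ j), mul_comm c1 _]
        refine mul_le_mul_of_nonneg_left ?_ (abs_nonneg _)
        refine Finset.prod_le_prod (fun i _ => sq_nonneg _) (fun i hi => ?_)
        have hij := (Finset.mem_erase.mp hi).1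
        obtain ⟨h1, h2⟩ := hmle i hij t ht
        have h0 := (hmpos i hij).le
        rw [abs_mul, sq]
        exact mul_le_mul h1 h2 h0 (abs_nonneg _)
      set M : ℝ := (1 / Real.pi) * ∏ k, max (|α j - cp k|) (|β j - cp k|) with hMdef
      have hM0 : 0 ≤ M := by
        refine mul_nonneg (by positivity) (Finset.prod_nonneg fun k _ => ?_)
        exact le_trans (abs_nonneg _) (le_max_left _ _)
      have hN : ∀ t ∈ Set.Icc (α j) (β j),
          1 / Real.pi * ∏ k, |t - cp k| ≤ M := by
        intro t ht
        refine mul_le_mul_of_nonneg_left ?_ (by positivity)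
        refine Finset.prod_le_prod (fun k _ => abs_nonneg _) (fun k _ => ?_)
        rcases le_total t (cp k) with h | h
        · refine le_max_iff.mpr (Or.inl ?_)
          rw [abs_of_nonpos (by linarith), abs_sub_comm]
          have := le_abs_self (cp k - α j)
          have := ht.1
          linarith
        · refine le_max_iff.mpr (Or.inr ?_)
          rw [abs_of_nonneg (by linarith), abs_sub_comm]
          have := le_abs_self (cp k - β j)
          have h2 := neg_le_abs (cp k - β j)
          have := ht.2
          linarith
      set hh : ℝ := (β j - α j) / 2 with hhdef
      have hhpos : 0 < hh := by have := hαβ j; simp only [hhdef]; linarith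
      set cc : ℝ := c1 * hh with hccdef
      have hccpos : 0 < cc := mul_pos hc1 hhpos
      -- generic half lemma
      have halfint : ∀ (γ a b : ℝ), Set.Icc a b ⊆ Set.Icc (α j) (β j) →
          (∀ t ∈ Set.Icc a b, cc * |t - γ| ≤ ∏ i, |(t - α i) * (t - β i)|) →
          (∀ t : ℝ, t = γ → (∏ i, |(t - α i) * (t - β i)|) = 0) →
          IntegrableOn (fun t => Real.log |t - z| * w t) (Set.Icc a b) volume := by
        intro γ a b hsub hlow hzero
        refine aux_piece z γ a b w hw0 hwmeas (M / Real.sqrt cc) (by positivity) ?_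
        intro t ht
        rw [hw t]
        by_cases hx : t = γ
        · rw [hzero t hx, Real.sqrt_zero, div_zero, hx, sub_self, abs_zero,
            Real.zero_rpow (by norm_num : (-(1/2):ℝ) ≠ 0), mul_zero]
        · have hxpos : 0 < |t - γ| := abs_pos.mpr (sub_ne_zero.mpr hx)
          have hP := hlow t ht
          have hD : Real.sqrt cc * Real.sqrt (|t - γ|) ≤
              Real.sqrt (∏ i, |(t - α i) * (t - β i)|) := by
            rw [← Real.sqrt_mul hccpos.le]
            exact Real.sqrt_le_sqrt hP
          have hDpos : 0 < Real.sqrt cc * Real.sqrt (|t - γ|) := by positivity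
          calc (1 / Real.pi) * (∏ k, |t - cp k|) / Real.sqrt (∏ i, |(t - α i) * (t - β i)|)
              ≤ M / (Real.sqrt cc * Real.sqrt (|t - γ|)) :=
                div_le_div₀ hM0 (hN t (hsub ht)) hDpos hD
            _ = M / Real.sqrt cc * |t - γ| ^ (-(1/2):ℝ) := by
                rw [Real.rpow_neg hxpos.le, ← Real.sqrt_eq_rpow, div_mul_eq_div_div,
                  div_eq_mul_inv]
      have hmid1 : α j ≤ (α j + β j)/2 := by linarith [hαβ j]
      have hmid2 : (α j + β j)/2 ≤ β j := by linarith [hαβ j]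
      rw [show Set.Icc (α j) (β j) =
          Set.Icc (α j) ((α j + β j)/2) ∪ Set.Icc ((α j + β j)/2) (β j) from
        (Set.Icc_union_Icc_eq_Icc hmid1 hmid2).symm]
      refine IntegrableOn.union ?_ ?_
      · refine halfint (α j) (α j) ((α j + β j)/2) (Set.Icc_subset_Icc le_rfl hmid2) ?_ ?_
        · intro t ht
          have ht' : t ∈ Set.Icc (α j) (β j) := ⟨ht.1, le_trans ht.2 hmid2⟩
          have e2 : hh ≤ |t - β j| := by
            rw [abs_of_nonpos (by linarith [ht.2] : t - β j ≤ 0)]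
            simp only [hhdef]; linarith [ht.2]
          calc cc * |t - α j| = c1 * (hh * |t - α j|) := by rw [hccdef]; ring
            _ ≤ c1 * (|t - β j| * |t - α j|) :=
                mul_le_mul_of_nonneg_left
                  (mul_le_mul_of_nonneg_right e2 (abs_nonneg _)) hc1.le
            _ = c1 * |(t - α j) * (t - β j)| := by rw [abs_mul]; ring
            _ ≤ _ := hPlow t ht'
        · intro t ht
          refine Finset.prod_eq_zero (Finset.mem_univ j) ?_
          rw [ht, sub_self, zero_mul, abs_zero]
      · refine halfint (β j) ((α j + β j)/2) (β j) (Set.Icc_subset_Icc hmid1 le_rfl) ?_ ?_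
        · intro t ht
          have ht' : t ∈ Set.Icc (α j) (β j) := ⟨le_trans hmid1 ht.1, ht.2⟩
          have e2 : hh ≤ |t - α j| := by
            rw [abs_of_nonneg (by linarith [ht.1, hmid1] : (0:ℝ) ≤ t - α j)]
            simp only [hhdef]; linarith [ht.1]
          calc cc * |t - β j| = c1 * (hh * |t - β j|) := by rw [hccdef]; ring
            _ ≤ c1 * (|t - α j| * |t - β j|) :=
                mul_le_mul_of_nonneg_left
                  (mul_le_mul_of_nonneg_right e2 (abs_nonneg _)) hc1.le
            _ = c1 * |(t - α j) * (t - β j)| := by rw [abs_mul]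
            _ ≤ _ := hPlow t ht'
        · intro t ht
          refine Finset.prod_eq_zero (Finset.mem_univ j) ?_
          rw [ht, sub_self, mul_zero, abs_zero]
    exact this
  -- a.e. positivity of w
  have hwne : ∀ᵐ t ∂μ, w t ≠ 0 := by
    have hs : MeasurableSet {t : ℝ | w t = 0} := hwmeas (measurableSet_singleton 0)
    have hμs : μ {t : ℝ | w t = 0} = 0 := by
      rw [hdensity, withDensity_apply _ hs]
      rw [lintegral_eq_zero_iff hwmeas.ennreal_ofReal]
      rw [Filter.EventuallyEq, ae_restrict_iff' hs]
      exact Filter.Eventually.of_forall fun t ht => by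
        simp only [Set.mem_setOf_eq] at ht
        simp [ht]
    rw [ae_iff]
    simpa using hμs
  -- pointwise identity
  have hae : (fun t => Real.log (w t)) =ᵐ[μ] fun t =>
      -Real.log Real.pi + (∑ k, Real.log |t - cp k|) -
        (∑ i, (Real.log |t - α i| + Real.log |t - β i|)) / 2 := by
    refine hwne.mono fun t ht => ?_
    have hwt : 0 < w t := (hw0 t).lt_of_ne' ht
    have hπ : (1:ℝ) / Real.pi ≠ 0 := one_div_ne_zero Real.pi_ne_zero
    have hwt2 : 0 < (1 / Real.pi) * (∏ k, |t - cp k|) /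
        Real.sqrt (∏ i, |(t - α i) * (t - β i)|) := hw t ▸ hwt
    have hsne : Real.sqrt (∏ i, |(t - α i) * (t - β i)|) ≠ 0 := by
      intro h0
      rw [h0, div_zero] at hwt2
      exact lt_irrefl 0 hwt2
    have hPnn : 0 ≤ ∏ i, |(t - α i) * (t - β i)| :=
      Finset.prod_nonneg fun i _ => abs_nonneg _
    have hPpos : 0 < ∏ i, |(t - α i) * (t - β i)| := by
      rcases hPnn.lt_or_eq with h | h
      · exact h
      · exact absurd (by rw [← h, Real.sqrt_zero]) hsne
    have hBpos : 0 < ∏ k, |t - cp k| := by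
      have hnum : 0 < 1 / Real.pi * ∏ k, |t - cp k| := by
        rcases div_pos_iff.mp hwt2 with ⟨h1, _⟩ | ⟨_, h2⟩
        · exact h1
        · exact absurd h2 (Real.sqrt_nonneg _).not_gt
      have h3 : 0 < Real.pi * (1 / Real.pi * ∏ k, |t - cp k|) :=
        mul_pos Real.pi_pos hnum
      rwa [← mul_assoc, mul_one_div_cancel Real.pi_ne_zero, one_mul] at h3
    have hfcp : ∀ k ∈ Finset.univ, |t - cp k| ≠ 0 :=
      Finset.prod_ne_zero_iff.mp hBpos.ne'
    have hfab : ∀ i ∈ Finset.univ, |(t - α i) * (t - β i)| ≠ 0 :=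
      Finset.prod_ne_zero_iff.mp hPpos.ne'
    have hsum : ∑ i, Real.log |(t - α i) * (t - β i)| =
        ∑ i, (Real.log |t - α i| + Real.log |t - β i|) := by
      refine Finset.sum_congr rfl fun i hi => ?_
      have h2 := abs_ne_zero.mp (hfab i hi)
      obtain ⟨ha, hb⟩ := mul_ne_zero_iff.mp h2
      rw [abs_mul, Real.log_mul (abs_ne_zero.mpr ha) (abs_ne_zero.mpr hb)]
    show Real.log (w t) = -Real.log Real.pi + (∑ k, Real.log |t - cp k|) -
        (∑ i, (Real.log |t - α i| + Real.log |t - β i|)) / 2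
    rw [hw t, Real.log_div (mul_ne_zero hπ hBpos.ne') hsne,
      Real.log_mul hπ hBpos.ne', Real.log_sqrt hPnn, one_div, Real.log_inv,
      Real.log_prod hfcp, Real.log_prod hfab, hsum]
  rw [integral_congr_ae hae]
  have hIcp : Integrable (fun t => ∑ k, Real.log |t - cp k|) μ :=
    integrable_finset_sum _ fun k _ => key (cp k)
  have h2 : ∀ i : Fin p, Integrable
      (fun t => Real.log |t - α i| + Real.log |t - β i|) μ :=
    fun i => (key (α i)).add (key (β i))
  have hIab0 : Integrable (fun t => ∑ i, (Real.log |t - α i| + Real.log |t - β i|)) μ :=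
    integrable_finset_sum _ fun i _ => h2 i
  have hIab : Integrable
      (fun t => (∑ i, (Real.log |t - α i| + Real.log |t - β i|)) / 2) μ :=
    hIab0.div_const 2
  have hva : ∀ i, ∫ t, Real.log |t - α i| ∂μ = Real.log cap := by
    intro i
    have : ∫ t, Real.log |t - α i| ∂μ = ∫ t, Real.log |α i - t| ∂μ := by
      simp_rw [abs_sub_comm _ (α i)]
    rw [this]
    exact hfrost (α i) (Set.mem_iUnion.mpr ⟨i, Set.left_mem_Icc.mpr (hαβ i).le⟩)
  have hvb : ∀ i, ∫ t, Real.log |t - β i| ∂μ = Real.log cap := by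
    intro i
    have : ∫ t, Real.log |t - β i| ∂μ = ∫ t, Real.log |β i - t| ∂μ := by
      simp_rw [abs_sub_comm _ (β i)]
    rw [this]
    exact hfrost (β i) (Set.mem_iUnion.mpr ⟨i, Set.right_mem_Icc.mpr (hαβ i).le⟩)
  have h1 : Integrable (fun t => -Real.log Real.pi + ∑ k, Real.log |t - cp k|) μ :=
    (integrable_const _).add hIcp
  rw [integral_sub h1 hIab,
    integral_add (integrable_const _) hIcp, integral_const,
    integral_finset_sum _ (fun k _ => key (cp k)), integral_div,
    integral_finset_sum _ (fun i _ => h2 i)]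
  have e2 : ∀ i : Fin p, (∫ t, (Real.log |t - α i| + Real.log |t - β i|) ∂μ) =
      Real.log cap + Real.log cap := fun i => by
    rw [integral_add (key (α i)) (key (β i)), hva i, hvb i]
  rw [Finset.sum_congr rfl fun k (_ : k ∈ Finset.univ) => hgreen k,
    Finset.sum_congr rfl fun i (_ : i ∈ Finset.univ) => e2 i,
    Finset.sum_add_distrib, Finset.sum_const, Finset.sum_const,
    Finset.card_univ, Finset.card_univ, Fintype.card_fin, Fintype.card_fin]
  simp only [measure_univ, probReal_univ, ENNReal.toReal_one, one_smul, nsmul_eq_mul,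
    Nat.cast_sub hp, Nat.cast_one]
  ring
end
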